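/- Let c_1,…,c_T ∈ [0, 1/2] be a sequence of abstention costs and let η > 0. Then the exponentially weighted forecaster with abstention satisfies R_T = ∑_{t=1}^T E[ℓ̂_t] − min_{i∈[N]} ∑_{t=1}^T ℓ_{t,i} ≤ (log N)/η + (η/8)·∑_{t=1}^T 1[1 − 2c_t < η]. -/

import Mathlib

noncomputable section

/-- Binary loss of expert `i` in round `t`: `1[y_{t,i} ≠ y_t]`. -/
def expertLoss {N : ℕ} (adv : ℕ → Fin N → ℝ) (y : ℕ → ℝ) (t : ℕ) (i : Fin N) : ℝ :=
  if adv t i = y t then 0 else 1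

/-- Normalized exponential weight `q_{t,i}` of expert `i` in round `t`. -/
def ewQ {N : ℕ} (η : ℝ) (adv : ℕ → Fin N → ℝ) (y : ℕ → ℝ) (t : ℕ) (i : Fin N) : ℝ :=
  Real.exp (-η * ∑ k ∈ Finset.range t, expertLoss adv y k i) /
    ∑ j, Real.exp (-η * ∑ k ∈ Finset.range t, expertLoss adv y k j)

/-- Aggregated prediction `p_t = ∑ i, q_{t,i} y_{t,i}`. -/
def aggP {N : ℕ} (η : ℝ) (adv : ℕ → Fin N → ℝ) (y : ℕ → ℝ) (t : ℕ) : ℝ :=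
  ∑ i, ewQ η adv y t i * adv t i

/-- Expected per-round loss of the exponentially weighted forecaster with abstention:
with `p* = max(p_t, 1 - p_t)`, `k* = 1[p_t ≥ 1/2]` and `α_t = 2(1 - p*)`, the expected
loss is `α_t · c_t + (1 - α_t) · 1[k* ≠ y_t]`. -/
def expAlgLoss {N : ℕ} (η : ℝ) (c : ℕ → ℝ) (adv : ℕ → Fin N → ℝ) (y : ℕ → ℝ) (t : ℕ) : ℝ :=
  let p := aggP η adv y t
  let pstar := max p (1 - p)
  let kstar : ℝ := if (1 : ℝ) / 2 ≤ p then 1 else 0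
  let α := 2 * (1 - pstar)
  α * c t + (1 - α) * (if kstar = y t then 0 else 1)

end


-- Auxiliary lemmas --


lemma padeE {t : ℝ} (ht : 0 ≤ t) : 2 - t ≤ Real.exp (-t) * (2 + t) := by
  have key : ∀ x : ℝ, HasDerivAt (fun u => Real.exp (-u) * (2 + u) - (2 - u))
      (1 - Real.exp (-x) * (1 + x)) x := by
    intro x
    have h1 : HasDerivAt (fun u : ℝ => Real.exp (-u)) (-Real.exp (-x)) x := by
      simpa [Function.comp_def] using (Real.hasDerivAt_exp (-x)).comp x (hasDerivAt_neg x)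
    have h2 : HasDerivAt (fun u : ℝ => (2 : ℝ) + u) 1 x := by
      simpa using (hasDerivAt_id x).const_add (2:ℝ)
    have h3 := h1.mul h2
    have h4 : HasDerivAt (fun u : ℝ => (2 : ℝ) - u) (-1) x := by
      simpa using (hasDerivAt_id x).const_sub (2:ℝ)
    exact (h3.sub h4).congr_deriv (by ring)
  have mono : MonotoneOn (fun u => Real.exp (-u) * (2 + u) - (2 - u)) (Set.Ici 0) := by
    apply monotoneOn_of_deriv_nonneg (convex_Ici 0)
    · exact Continuous.continuousOn (by continuity)
    · intro x _; exact (key x).differentiableAt.differentiableWithinAt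
    · intro x hx
      rw [(key x).deriv]
      have : Real.exp (-x) * (1 + x) ≤ 1 := by
        rw [Real.exp_neg, inv_mul_le_iff₀ (Real.exp_pos x), mul_one]
        have := Real.add_one_le_exp x
        linarith
      linarith
  have := mono (Set.self_mem_Ici) (Set.mem_Ici.2 ht) ht
  simp only [Real.exp_zero, neg_zero, one_mul] at this
  linarith

lemma claimG {A x : ℝ} (hA0 : 0 ≤ A) (hA1 : A ≤ 1) (hx : 0 ≤ x) :
    4*A*(1-A)*(1 - Real.exp (-x)) ≤ x * (1 - A + A * Real.exp (-x)) := by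
  set s := Real.exp (-x) with hs
  have hs0 : 0 < s := Real.exp_pos _
  have hs1 : s ≤ 1 := Real.exp_le_one_iff.2 (by linarith : -x ≤ 0)
  rcases le_or_gt x 4 with h4 | h4
  · have amgm : A*(1-A+x/4) ≤ ((1+x/4)/2)^2 := by nlinarith [sq_nonneg (A - (1-A+x/4))]
    have hp := padeE (t := x/2) (by linarith)
    have hmul : Real.exp (-(x/2)) * Real.exp (-(x/2)) = s := by
      rw [hs, ← Real.exp_add]; ring_nf
    have hnn : (0:ℝ) ≤ 2 - x/2 := by linarith
    have key : (4-x)^2 ≤ s*(4+x)^2 := by nlinarith [Real.exp_pos (-(x/2))]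
    nlinarith [mul_nonneg (mul_nonneg hA0 (by linarith : (0:ℝ) ≤ 1-A)) (by linarith : (0:ℝ) ≤ 1-s)]
  · nlinarith [mul_nonneg (by linarith : (0:ℝ) ≤ 1-A) (by nlinarith : (0:ℝ) ≤ x - 4*(1-s)*A),
      mul_nonneg (mul_nonneg hx hA0) hs0.le]

lemma bernoulliHoeffding {A x : ℝ} (hA0 : 0 ≤ A) (hA1 : A ≤ 1) (hx : 0 ≤ x) :
    Real.log (1 - A + A * Real.exp (-x)) ≤ -(x*A) + x^2/8 := by
  have hD : ∀ u : ℝ, 0 ≤ u → 0 < 1 - A + A * Real.exp (-u) := by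
    intro u hu
    have h1 : Real.exp (-u) ≤ 1 := Real.exp_le_one_iff.2 (by linarith : -u ≤ 0)
    nlinarith [Real.exp_pos (-u)]
  set f : ℝ → ℝ := fun u => Real.log (1 - A + A * Real.exp (-u)) + u*A - u^2/8 with hf
  have key : ∀ u : ℝ, 0 < u → HasDerivAt f
      (-(A * Real.exp (-u)) / (1 - A + A * Real.exp (-u)) + A - u/4) u := by
    intro u hu
    have h1 : HasDerivAt (fun v : ℝ => Real.exp (-v)) (-Real.exp (-u)) u := by
      simpa [Function.comp_def] using (Real.hasDerivAt_exp (-u)).comp u (hasDerivAt_neg u)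
    have h2 : HasDerivAt (fun v : ℝ => 1 - A + A * Real.exp (-v)) (-(A * Real.exp (-u))) u := by
      simpa [mul_comm, neg_mul, mul_neg] using (h1.const_mul A).const_add (1 - A)
    have h3 := h2.log (ne_of_gt (hD u hu.le))
    have h4 : HasDerivAt (fun v : ℝ => v * A - v^2/8) (A - u/4) u := by
      have := ((hasDerivAt_id u).mul_const A).sub (((hasDerivAt_pow 2 u)).div_const 8)
      exact this.congr_deriv (by ring)
    have h5 := h3.add h4
    have hfe : f = (fun y => Real.log (1 - A + A * Real.exp (-y)) + (y * A - y ^ 2 / 8)) := by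
      funext v; simp only [hf]; ring
    rw [hfe]
    exact h5.congr_deriv (by ring)
  have anti : AntitoneOn f (Set.Ici 0) := by
    apply antitoneOn_of_deriv_nonpos (convex_Ici 0)
    · apply ContinuousOn.sub
      apply ContinuousOn.add
      · apply ContinuousOn.log
        · exact Continuous.continuousOn (by continuity)
        · intro u hu; exact ne_of_gt (hD u hu)
      · exact Continuous.continuousOn (by continuity)
      · exact Continuous.continuousOn (by continuity)
    · intro u hu
      rw [interior_Ici] at hu
      exact (key u hu).differentiableAt.differentiableWithinAt
    · intro u hu
      rw [interior_Ici] at hu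
      rw [(key u hu).deriv]
      have hDu := hD u hu.le
      have hcg := claimG hA0 hA1 hu.le
      rw [div_add' _ _ _ (ne_of_gt hDu)]
      have h6 : (-(A * Real.exp (-u)) + A * (1 - A + A * Real.exp (-u))) / (1 - A + A * Real.exp (-u)) ≤ u/4 := by
        rw [div_le_iff₀ hDu]; nlinarith
      linarith
  have h0 : f 0 = 0 := by simp [hf]
  have := anti Set.self_mem_Ici (Set.mem_Ici.2 hx) hx
  rw [h0] at this
  have : Real.log (1 - A + A * Real.exp (-x)) + x*A - x^2/8 ≤ 0 := this
  linarith


lemma expNegQuad {η : ℝ} (h0 : 0 ≤ η) : Real.exp (-η) ≤ 1 - η + η^2 := by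
  have h1 : Real.exp (-η) * Real.exp η = 1 := by rw [← Real.exp_add]; simp
  nlinarith [Real.add_one_le_exp η, Real.exp_pos η, Real.exp_pos (-η), sq_nonneg η,
    mul_pos (Real.exp_pos (-η)) (Real.exp_pos η)]

lemma expQuad {η : ℝ} (h0 : 0 ≤ η) (h1 : η ≤ 1) : Real.exp η ≤ 1 + η + η^2 := by
  have h := Real.exp_bound' h0 h1 (n := 3) (by norm_num)
  have hs : ∑ i ∈ Finset.range 3, η^i / (Nat.factorial i) = 1 + η + η^2/2 := by
    simp [Finset.sum_range_succ, Nat.factorial]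
  rw [hs] at h
  have : η^3 ≤ η^2 := by nlinarith
  have h18 : (Nat.factorial 3 : ℝ) = 6 := by norm_num [Nat.factorial]
  rw [h18] at h
  nlinarith

lemma coreRound {A c η : ℝ} (hA0 : 0 ≤ A) (hA1 : A ≤ 1) (hc0 : 0 ≤ c) (hc : c ≤ 1/2)
    (hη : 0 < η) :
    (if A ≤ 1/2 then 2*A*c else 1-2*(1-A)*(1-c))
      ≤ -(1/η) * Real.log (1 - A + A * Real.exp (-η))
        + η/8 * (if 1 - 2*c < η then 1 else 0) := by
  set Z := 1 - A + A * Real.exp (-η) with hZ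
  have hexp1 : Real.exp (-η) ≤ 1 := Real.exp_le_one_iff.2 (by linarith : -η ≤ 0)
  have hZpos : 0 < Z := by nlinarith [Real.exp_pos (-η)]
  have hdiv : -(1/η) * Real.log Z = (-Real.log Z)/η := by ring
  by_cases hind : 1 - 2*c < η
  · simp only [hind, if_true, mul_one]
    have h1 : (if A ≤ 1/2 then 2*A*c else 1-2*(1-A)*(1-c)) ≤ A := by
      split <;> nlinarith
    have h2 := bernoulliHoeffding hA0 hA1 hη.le
    have h4 : A - η/8 ≤ -(1/η) * Real.log Z := by
      rw [hdiv, le_div_iff₀ hη]; nlinarith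
    linarith
  · simp only [hind, if_false, mul_zero, add_zero]
    push_neg at hind
    have hη1 : η ≤ 1 := by linarith
    split_ifs with hA
    · -- correct branch: 2Ac
      have e1 : Real.exp (-η) ≤ 1 - η + η^2 := expNegQuad hη.le
      have e2 : 1 - 2*η*A*c ≤ Real.exp (-(2*η*A*c)) := by
        linarith [Real.add_one_le_exp (-(2*η*A*c))]
      have hAc : 2*η*A*c ≤ A*(1 - Real.exp (-η)) := by
        nlinarith [mul_nonneg hA0 (show (0:ℝ) ≤ η - η^2 - 2*η*c by nlinarith)]
      have hZle : Z ≤ Real.exp (-(2*η*A*c)) := by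
        have : Z = 1 - A*(1 - Real.exp (-η)) := by rw [hZ]; ring
        rw [this]; linarith
      have hl : Real.log Z ≤ -(2*η*A*c) := (Real.log_le_iff_le_exp hZpos).2 hZle
      rw [hdiv, le_div_iff₀ hη]; nlinarith
    · -- wrong branch
      push_neg at hA
      have e3 : Real.exp η ≤ 1 + η + η^2 := expQuad hη.le hη1
      have hee : Real.exp (-η) * Real.exp η = 1 := by rw [← Real.exp_add]; simp
      have e4 : 1 + 2*η*(1-A)*(1-c) ≤ Real.exp (2*η*(1-A)*(1-c)) :=
        by linarith [Real.add_one_le_exp (2*η*(1-A)*(1-c))]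
      have key : Z * Real.exp η ≤ Real.exp (2*η*(1-A)*(1-c)) := by
        have expand : Z * Real.exp η = (1-A)*Real.exp η + A := by
          rw [hZ]; nlinarith [hee]
        rw [expand]
        have step : (1-A)*Real.exp η + A ≤ 1 + 2*η*(1-A)*(1-c) := by
          nlinarith [mul_nonneg (show (0:ℝ) ≤ 1-A by linarith)
            (show (0:ℝ) ≤ 2*η*(1-c) - (η+η^2) by nlinarith),
            mul_le_mul_of_nonneg_left e3 (show (0:ℝ) ≤ 1-A by linarith)]
        linarith
      have hZle : Z ≤ Real.exp (2*η*(1-A)*(1-c) - η) := by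
        rw [Real.exp_sub, le_div_iff₀ (Real.exp_pos η)]; exact key
      have hl : Real.log Z ≤ 2*η*(1-A)*(1-c) - η := (Real.log_le_iff_le_exp hZpos).2 hZle
      rw [hdiv, le_div_iff₀ hη]; nlinarith

/-- Proposition 5: with a time-varying sequence of abstention costs `c_t ∈ [0, 1/2]`,
the exponentially weighted forecaster with abstention satisfies
`R_T ≤ (log N)/η + (η/8)·∑_t 1[1 - 2c_t < η]`. -/
theorem abstention_changing_costs (N T : ℕ) (hN : 2 ≤ N) (hT : 1 ≤ T) (c : ℕ → ℝ) (η : ℝ)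
    (hc : ∀ t, c t ∈ Set.Icc (0 : ℝ) (1 / 2)) (hη0 : 0 < η)
    (adv : ℕ → Fin N → ℝ) (y : ℕ → ℝ)
    (hadv : ∀ t i, adv t i = 0 ∨ adv t i = 1) (hy : ∀ t, y t = 0 ∨ y t = 1) :
    (∑ t ∈ Finset.range T, expAlgLoss η c adv y t)
        - ⨅ i : Fin N, ∑ t ∈ Finset.range T, expertLoss adv y t i
      ≤ Real.log N / η
          + (η / 8) * ∑ t ∈ Finset.range T, (if 1 - 2 * c t < η then (1 : ℝ) else 0) := by
  classical
  haveI : NeZero N := ⟨by omega⟩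
  set L : ℕ → Fin N → ℝ := fun t i => ∑ k ∈ Finset.range t, expertLoss adv y k i with hL
  set S : ℕ → ℝ := fun t => ∑ j, Real.exp (-η * L t j) with hSdef
  have hS : ∀ t, 0 < S t := fun t =>
    Finset.sum_pos (fun j _ => Real.exp_pos _) Finset.univ_nonempty
  have hq : ∀ t i, ewQ η adv y t i = Real.exp (-η * L t i) / S t := fun t i => rfl
  have hq0 : ∀ t i, 0 ≤ ewQ η adv y t i := fun t i => by
    rw [hq]; exact div_nonneg (Real.exp_pos _).le (hS t).le
  have hqsum : ∀ t, ∑ i, ewQ η adv y t i = 1 := by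
    intro t
    have : ∑ i, ewQ η adv y t i = (∑ i, Real.exp (-η * L t i)) / S t := by
      rw [Finset.sum_div]; exact Finset.sum_congr rfl (fun i _ => hq t i)
    rw [this, hSdef]
    exact div_self (hS t).ne'
  set A : ℕ → ℝ := fun t => ∑ i, ewQ η adv y t i * expertLoss adv y t i with hA
  have hl01 : ∀ t i, expertLoss adv y t i = 0 ∨ expertLoss adv y t i = 1 := by
    intro t i; unfold expertLoss; split
    · exact Or.inl rfl
    · exact Or.inr rfl
  have hA0 : ∀ t, 0 ≤ A t := by
    intro t; rw [hA]
    exact Finset.sum_nonneg fun i _ => mul_nonneg (hq0 t i)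
      (by rcases hl01 t i with h|h <;> simp [h])
  have hA1 : ∀ t, A t ≤ 1 := by
    intro t; rw [hA, ← hqsum t]
    exact Finset.sum_le_sum fun i _ => by
      rcases hl01 t i with h|h <;> simp [h, hq0 t i]
  have hZident : ∀ t, 1 - A t + A t * Real.exp (-η) = S (t+1) / S t := by
    intro t
    have lhs_eq : ∑ i, ewQ η adv y t i * Real.exp (-η * expertLoss adv y t i)
        = 1 - A t + A t * Real.exp (-η) := by
      have step : ∀ i ∈ Finset.univ, ewQ η adv y t i * Real.exp (-η * expertLoss adv y t i)
          = (ewQ η adv y t i - ewQ η adv y t i * expertLoss adv y t i)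
            + (ewQ η adv y t i * expertLoss adv y t i) * Real.exp (-η) := by
        intro i _
        rcases hl01 t i with h|h <;> rw [h] <;> simp <;> ring
      rw [Finset.sum_congr rfl step, Finset.sum_add_distrib, Finset.sum_sub_distrib,
        ← Finset.sum_mul, hqsum t, hA]
    have rhs_eq : ∑ i, ewQ η adv y t i * Real.exp (-η * expertLoss adv y t i)
        = S (t+1) / S t := by
      have step : ∀ i ∈ Finset.univ, ewQ η adv y t i * Real.exp (-η * expertLoss adv y t i)
          = Real.exp (-η * L (t+1) i) / S t := by
        intro i _
        rw [hq, div_mul_eq_mul_div, ← Real.exp_add]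
        congr 2
        rw [hL]
        simp only [Finset.sum_range_succ]
        ring
      rw [Finset.sum_congr rfl step, ← Finset.sum_div, hSdef]
    rw [← lhs_eq, rhs_eq]
  have hloss : ∀ t, expAlgLoss η c adv y t
      = if A t ≤ 1/2 then 2*(A t)*(c t) else 1-2*(1-A t)*(1-c t) := by
    intro t
    simp only [expAlgLoss]
    rcases hy t with hyt | hyt
    · -- y t = 0 : p = A t
      have hp : aggP η adv y t = A t := by
        rw [aggP, hA]
        refine Finset.sum_congr rfl fun i _ => ?_
        rcases hadv t i with h|h <;> simp [expertLoss, h, hyt]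
      rw [hp, hyt]
      rcases lt_trichotomy (A t) (1/2) with hAt | hAt | hAt
      · have h2 : ¬ ((1:ℝ)/2 ≤ A t) := by linarith
        have hm : max (A t) (1 - A t) = 1 - A t := max_eq_right (by linarith)
        simp only [h2, if_false, hm, if_pos hAt.le]
        norm_num
      · rw [hAt]
        norm_num
      · have h2 : (1:ℝ)/2 ≤ A t := by linarith
        have hm : max (A t) (1 - A t) = A t := max_eq_left (by linarith)
        have h3 : ¬ (A t ≤ (1:ℝ)/2) := by linarith
        simp only [h2, if_true, hm, h3, if_false]
        norm_num
        ring
    · -- y t = 1 : p = 1 - A t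
      have hp : aggP η adv y t = 1 - A t := by
        have step : ∀ i ∈ Finset.univ, ewQ η adv y t i * adv t i
            = ewQ η adv y t i - ewQ η adv y t i * expertLoss adv y t i := by
          intro i _
          rcases hadv t i with h|h <;> simp [expertLoss, h, hyt]
        rw [aggP, Finset.sum_congr rfl step, Finset.sum_sub_distrib, hqsum t, hA]
      rw [hp, hyt]
      rcases le_or_gt (A t) (1/2) with hAt | hAt
      · have h2 : (1:ℝ)/2 ≤ 1 - A t := by linarith
        have hm : max (1 - A t) (1 - (1 - A t)) = 1 - A t := max_eq_left (by linarith)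
        simp only [h2, if_true, hm, hAt, if_pos]
        norm_num
      · have h2 : ¬((1:ℝ)/2 ≤ 1 - A t) := by linarith
        have hm : max (1 - A t) (1 - (1 - A t)) = 1 - (1 - A t) := max_eq_right (by linarith)
        have h3 : ¬(A t ≤ (1:ℝ)/2) := by linarith
        simp only [h2, hm, h3, if_false]
        norm_num
        ring
  have hround : ∀ t, expAlgLoss η c adv y t
      ≤ -(1/η)*(Real.log (S (t+1)) - Real.log (S t))
        + η/8 * (if 1 - 2*(c t) < η then 1 else 0) := by
    intro t
    have hcr := coreRound (hA0 t) (hA1 t) (hc t).1 (hc t).2 hη0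
    rw [hloss t]
    have hlog : Real.log (S (t+1)) - Real.log (S t)
        = Real.log (1 - A t + A t * Real.exp (-η)) := by
      rw [hZident t, Real.log_div (hS (t+1)).ne' (hS t).ne']
    rw [hlog]
    exact hcr
  have hsum : ∑ t ∈ Finset.range T, expAlgLoss η c adv y t
      ≤ -(1/η)*(Real.log (S T) - Real.log (S 0))
        + η/8 * ∑ t ∈ Finset.range T, (if 1 - 2 * c t < η then (1:ℝ) else 0) := by
    calc ∑ t ∈ Finset.range T, expAlgLoss η c adv y t
        ≤ ∑ t ∈ Finset.range T, (-(1/η)*(Real.log (S (t+1)) - Real.log (S t))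
            + η/8 * (if 1 - 2*(c t) < η then 1 else 0)) :=
          Finset.sum_le_sum fun t _ => hround t
      _ = -(1/η)*(Real.log (S T) - Real.log (S 0))
            + η/8 * ∑ t ∈ Finset.range T, (if 1 - 2 * c t < η then (1:ℝ) else 0) := by
          rw [Finset.sum_add_distrib, ← Finset.mul_sum, ← Finset.mul_sum,
            Finset.sum_range_sub (fun t => Real.log (S t))]
  have hS0 : S 0 = N := by
    rw [hSdef]
    simp [hL]
  have hiInf : -(1/η) * Real.log (S T)
      ≤ ⨅ i : Fin N, ∑ t ∈ Finset.range T, expertLoss adv y t i := by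
    apply le_ciInf
    intro i
    have h1 : Real.exp (-η * L T i) ≤ S T :=
      Finset.single_le_sum (f := fun j => Real.exp (-η * L T j))
        (fun j _ => (Real.exp_pos (-η * L T j)).le) (Finset.mem_univ i)
    have h2 : -η * L T i ≤ Real.log (S T) := by
      calc -η * L T i = Real.log (Real.exp (-η * L T i)) := (Real.log_exp _).symm
        _ ≤ Real.log (S T) := Real.log_le_log (Real.exp_pos _) h1
    have h3 : (∑ t ∈ Finset.range T, expertLoss adv y t i) = L T i := by rw [hL]
    rw [h3, show -(1/η) * Real.log (S T) = (-Real.log (S T))/η from by ring,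
      div_le_iff₀ hη0]
    linarith
  rw [hS0] at hsum
  have expand : -(1/η) * (Real.log (S T) - Real.log (N:ℝ))
      = -(1/η) * Real.log (S T) + Real.log (N:ℝ) / η := by ring
  rw [expand] at hsum
  linarith [hsum, hiInf]
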